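/- Let x̄_i denote the center of gravity of blocks 1 through i in a balanced stack. If for some i ≥ p (p the protruding block) the stack is not right-aligned at i, i.e., x̄_i < x_{i+1} + w_{i+1}, then with d = (x_{i+1} + w_{i+1}) − x̄_i > 0 and δ, ε ∈ (0, d/2] chosen so that δ·m_{i+1} = ε·M_i, shifting block i+1 left by δ and blocks 1,…,i right by ε leaves the combined center of gravity of blocks 1,…,i+1 unchanged, keeps the stack balanced, and strictly increases the overhang. Hence any maximum-overhang stack is right-aligned at all blocks i ≥ p. -/

import Mathlib

open Finset

/-- If a balanced stack (blocks `0,…,n-1`, top to bottom) is not right-aligned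
at some block `i ≥ p` (with `p` the protruding block), then the described shift
(block `i+1` left by `δ`, blocks `0,…,i` right by `ε`, where `δ·m_{i+1} = ε·M_i`
and `δ, ε ∈ (0, d/2]`) preserves the combined center of gravity of blocks
`0,…,i+1`, keeps the stack balanced, and strictly increases the overhang. -/
theorem not_right_aligned_improvable (n : ℕ) (x w m : ℕ → ℝ)
    (hw : ∀ j, 0 ≤ w j) (hm : ∀ j, 0 < m j)
    (M : ℕ → ℝ) (hM : ∀ k, M k = ∑ j ∈ Finset.range (k + 1), m j)
    (xbar : ℕ → ℝ) (hxbar : ∀ k, xbar k = (∑ j ∈ Finset.range (k + 1), m j * x j) / M k)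
    (hbal : ∀ k, k + 1 < n → x (k + 1) - w (k + 1) ≤ xbar k ∧ xbar k ≤ x (k + 1) + w (k + 1))
    (p i : ℕ) (hpi : p ≤ i) (hin : i + 1 < n)
    (hprot : ∀ j, j < n → x j + w j ≤ x p + w p)
    (hnra : xbar i < x (i + 1) + w (i + 1))
    (d : ℝ) (hd : d = (x (i + 1) + w (i + 1)) - xbar i)
    (δ ε : ℝ) (hδ : 0 < δ) (hδd : δ ≤ d / 2) (hε : 0 < ε) (hεd : ε ≤ d / 2)
    (hδε : δ * m (i + 1) = ε * M i)
    (x' : ℕ → ℝ)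
    (hx' : ∀ j, x' j = if j ≤ i then x j + ε else if j = i + 1 then x (i + 1) - δ else x j) :
    -- the center of gravity of blocks 0,…,i+1 is unchanged
    (∑ j ∈ Finset.range (i + 2), m j * x' j) / M (i + 1) = xbar (i + 1) ∧
    -- the shifted stack is still balanced
    (∀ k, k + 1 < n →
      x' (k + 1) - w (k + 1) ≤ (∑ j ∈ Finset.range (k + 1), m j * x' j) / M k ∧
      (∑ j ∈ Finset.range (k + 1), m j * x' j) / M k ≤ x' (k + 1) + w (k + 1)) ∧
    -- and it has a strictly larger overhang
    ((Finset.range n).sup' (Finset.nonempty_range_iff.mpr (by omega)) (fun j => x j + w j)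
      < (Finset.range n).sup' (Finset.nonempty_range_iff.mpr (by omega)) (fun j => x' j + w j)) := by
  have hMpos : ∀ k, 0 < M k := by
    intro k
    rw [hM]
    exact Finset.sum_pos (fun j _ => hm j) (Finset.nonempty_range_iff.mpr (Nat.succ_ne_zero k))
  -- sums for k ≤ i
  have hA : ∀ k, k ≤ i → ∑ j ∈ Finset.range (k + 1), m j * x' j
      = (∑ j ∈ Finset.range (k + 1), m j * x j) + ε * M k := by
    intro k hk
    rw [hM]
    rw [Finset.mul_sum, ← Finset.sum_add_distrib]
    apply Finset.sum_congr rfl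
    intro j hj
    have hji : j ≤ i := by
      have := Finset.mem_range.mp hj; omega
    rw [hx' j, if_pos hji]
    ring
  -- sum for the block i+1
  have hB : ∑ j ∈ Finset.range (i + 2), m j * x' j = ∑ j ∈ Finset.range (i + 2), m j * x j := by
    rw [Finset.sum_range_succ, Finset.sum_range_succ (f := fun j => m j * x j), hA i le_rfl]
    have hxi1 : x' (i + 1) = x (i + 1) - δ := by
      rw [hx' (i + 1), if_neg (by omega), if_pos rfl]
    rw [hxi1]
    nlinarith [hδε]
  -- sums for k ≥ i+1
  have hC : ∀ k, i + 1 ≤ k → ∑ j ∈ Finset.range (k + 1), m j * x' j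
      = ∑ j ∈ Finset.range (k + 1), m j * x j := by
    intro k hk
    have h1 : i + 2 ≤ k + 1 := by omega
    rw [Finset.range_eq_Ico, ← Finset.sum_Ico_consecutive (fun j => m j * x' j) (Nat.zero_le (i + 2)) h1,
        ← Finset.sum_Ico_consecutive (fun j => m j * x j) (Nat.zero_le (i + 2)) h1]
    have h2 : ∑ j ∈ Finset.Ico (i + 2) (k + 1), m j * x' j
        = ∑ j ∈ Finset.Ico (i + 2) (k + 1), m j * x j := by
      apply Finset.sum_congr rfl
      intro j hj
      have hj2 : i + 2 ≤ j := (Finset.mem_Ico.mp hj).1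
      rw [hx' j, if_neg (by omega), if_neg (by omega)]
    rw [h2, ← Finset.range_eq_Ico, hB]
  refine ⟨?_, ?_, ?_⟩
  · rw [hB, hxbar]
  · intro k hkn
    rcases lt_trichotomy k i with hki | hki | hki
    · -- k < i : everything shifts by ε
      have hx1 : x' (k + 1) = x (k + 1) + ε := by
        rw [hx' (k + 1), if_pos (by omega)]
      have hsum : (∑ j ∈ Finset.range (k + 1), m j * x' j) / M k = xbar k + ε := by
        rw [hA k (le_of_lt hki), add_div, mul_div_assoc, div_self (ne_of_gt (hMpos k)),
            mul_one, hxbar]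
      rw [hx1, hsum]
      obtain ⟨h1, h2⟩ := hbal k hkn
      constructor <;> linarith
    · -- k = i
      subst hki
      have hx1 : x' (k + 1) = x (k + 1) - δ := by
        rw [hx' (k + 1), if_neg (by omega), if_pos rfl]
      have hsum : (∑ j ∈ Finset.range (k + 1), m j * x' j) / M k = xbar k + ε := by
        rw [hA k le_rfl, add_div, mul_div_assoc, div_self (ne_of_gt (hMpos k)),
            mul_one, hxbar]
      rw [hx1, hsum]
      obtain ⟨h1, h2⟩ := hbal k hkn
      constructor <;> linarith
    · -- k > i
      have hx1 : x' (k + 1) = x (k + 1) := by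
        rw [hx' (k + 1), if_neg (by omega), if_neg (by omega)]
      rw [hx1, hC k (by omega), ← hxbar]
      exact hbal k hkn
  · -- overhang increases
    have hne : (Finset.range n).Nonempty := Finset.nonempty_range_iff.mpr (by omega)
    have hpn : p ∈ Finset.range n := Finset.mem_range.mpr (by omega)
    have hold : (Finset.range n).sup' hne (fun j => x j + w j) ≤ x p + w p := by
      apply Finset.sup'_le
      intro j hj
      exact hprot j (Finset.mem_range.mp hj)
    have hnew : x' p + w p ≤ (Finset.range n).sup' hne (fun j => x' j + w j) :=
      Finset.le_sup' (fun j => x' j + w j) hpn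
    have hxp : x' p = x p + ε := by rw [hx' p, if_pos hpi]
    calc (Finset.range n).sup' hne (fun j => x j + w j) ≤ x p + w p := hold
      _ < x' p + w p := by rw [hxp]; linarith
      _ ≤ _ := hnew
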